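/- arXiv:2306.17606 — 2 statements merged into one kernel-verified Lean document; each statement's English description precedes it below -/
import Mathlib

section
/- Let X ∈ ℂ^{r} and Y ∈ ℂ^{q} be complex vectors (columns), viewed as r×1 and q×1 matrices. Suppose there exists a real matrix Δ ∈ ℝ^{q×r} with ΔX = Y. Then the matrix Δ* = [Re(Y) Im(Y)] · [Re(X) Im(X)]† (where † denotes the Moore–Penrose pseudoinverse of the r×2 real matrix [Re(X) Im(X)]) satisfies Δ* X = Y. -/
open Matrix
open scoped Classical

/-- The Moore–Penrose pseudoinverse of a real matrix, characterized by the four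
Penrose conditions. -/
noncomputable def pinv {m n : ℕ} (A : Matrix (Fin m) (Fin n) ℝ) :
    Matrix (Fin n) (Fin m) ℝ :=
  if h : ∃ B : Matrix (Fin n) (Fin m) ℝ,
      A * B * A = A ∧ B * A * B = B ∧ (A * B)ᵀ = A * B ∧ (B * A)ᵀ = B * A
  then h.choose else 0

/-- The `r × 2` real matrix `[Re(X) Im(X)]` formed from a complex vector `X`. -/
noncomputable def reimCols {r : ℕ} (X : Fin r → ℂ) : Matrix (Fin r) (Fin 2) ℝ :=
  Matrix.of fun i k => if k = 0 then (X i).re else (X i).im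

lemma exists_pinv {m n : ℕ} (A : Matrix (Fin m) (Fin n) ℝ) :
    ∃ B : Matrix (Fin n) (Fin m) ℝ,
      A * B * A = A ∧ B * A * B = B ∧ (A * B)ᵀ = A * B ∧ (B * A)ᵀ = B * A := by
  have hS : (Aᵀ * A).IsHermitian := by
    rw [← conjTranspose_eq_transpose_of_trivial A]
    exact isHermitian_conjTranspose_mul_self A
  set U : Matrix (Fin n) (Fin n) ℝ := ↑hS.eigenvectorUnitary with hUdef
  set D : Matrix (Fin n) (Fin n) ℝ := diagonal hS.eigenvalues with hDdef
  set Dp : Matrix (Fin n) (Fin n) ℝ :=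
    diagonal (fun i => if hS.eigenvalues i = 0 then 0 else (hS.eigenvalues i)⁻¹) with hDpdef
  have hUtU : Uᵀ * U = 1 := by
    have := Matrix.UnitaryGroup.star_mul_self hS.eigenvectorUnitary
    rw [star_eq_conjTranspose, conjTranspose_eq_transpose_of_trivial] at this
    exact this
  have hUUt : U * Uᵀ = 1 := by
    have := Matrix.mem_unitaryGroup_iff.mp hS.eigenvectorUnitary.2
    rw [star_eq_conjTranspose, conjTranspose_eq_transpose_of_trivial] at this
    exact this
  have hspec : Aᵀ * A = U * D * Uᵀ := by
    have := hS.spectral_theorem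
    rw [hUdef, hDdef]
    simpa [star_eq_conjTranspose, conjTranspose_eq_transpose_of_trivial, Function.comp] using this
  -- kernel fact
  have hker : ∀ j, hS.eigenvalues j = 0 → (A *ᵥ (fun k => U k j)) = 0 := by
    intro j hj
    set v : Fin n → ℝ := fun k => U k j with hvdef
    have h2 : v = ⇑(hS.eigenvectorBasis j) := by
      funext k
      rw [hvdef, hUdef]
      exact hS.eigenvectorUnitary_apply k j
    have hv : (Aᵀ * A) *ᵥ v = 0 := by
      rw [h2, hS.mulVec_eigenvectorBasis j, hj, zero_smul]
    have hz : (A *ᵥ v) ⬝ᵥ (A *ᵥ v) = 0 := by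
      have h3 : Aᵀ *ᵥ (A *ᵥ v) = 0 := by rw [mulVec_mulVec, hv]
      calc (A *ᵥ v) ⬝ᵥ (A *ᵥ v) = v ᵥ* Aᵀ ⬝ᵥ (A *ᵥ v) := by rw [vecMul_transpose]
        _ = v ⬝ᵥ (Aᵀ *ᵥ (A *ᵥ v)) := (dotProduct_mulVec v Aᵀ _).symm
        _ = 0 := by rw [h3, dotProduct_zero]
    simp only [dotProduct] at hz
    have hall := (Finset.sum_eq_zero_iff_of_nonneg (fun i _ => mul_self_nonneg _)).mp hz
    funext i
    exact mul_self_eq_zero.mp (hall i (Finset.mem_univ i))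
  have hDpD : Dp * D = diagonal (fun i => if hS.eigenvalues i = 0 then (0:ℝ) else 1) := by
    rw [hDpdef, hDdef, diagonal_mul_diagonal]
    refine congrArg diagonal (funext fun i => ?_)
    by_cases hi : hS.eigenvalues i = 0
    · simp [hi]
    · simp [hi, inv_mul_cancel₀ hi]
  have hkey : A * U * Dp * D = A * U := by
    rw [Matrix.mul_assoc (A * U), hDpD]
    ext i j
    rw [mul_diagonal]
    by_cases hj : hS.eigenvalues j = 0
    · have h0 := congrFun (hker j hj) i
      simp only [mulVec, dotProduct, Pi.zero_apply] at h0
      have : (A * U) i j = 0 := by rw [mul_apply]; exact h0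
      simp [this, hj]
    · simp [hj]
  have hDpT : Dpᵀ = Dp := by rw [hDpdef, diagonal_transpose]
  have hDpDDp : Dp * D * Dp = Dp := by
    rw [hDpD, hDpdef, diagonal_mul_diagonal]
    refine congrArg diagonal (funext fun i => ?_)
    by_cases hi : hS.eigenvalues i = 0
    · simp [hi]
    · simp [hi]
  refine ⟨U * Dp * Uᵀ * Aᵀ, ?_, ?_, ?_, ?_⟩
  · -- A * B * A = A
    calc A * (U * Dp * Uᵀ * Aᵀ) * A
        = A * U * Dp * (Uᵀ * (Aᵀ * A)) := by
          simp only [Matrix.mul_assoc]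
      _ = A * U * Dp * (Uᵀ * U * D * Uᵀ) := by
          rw [hspec]; simp only [Matrix.mul_assoc]
      _ = A * U * Dp * (D * Uᵀ) := by rw [hUtU, Matrix.one_mul]
      _ = A * U * Dp * D * Uᵀ := by simp only [Matrix.mul_assoc]
      _ = A * U * Uᵀ := by rw [hkey]
      _ = A := by rw [Matrix.mul_assoc, hUUt, Matrix.mul_one]
  · -- B * A * B = B
    calc U * Dp * Uᵀ * Aᵀ * A * (U * Dp * Uᵀ * Aᵀ)
        = U * Dp * (Uᵀ * (Aᵀ * A) * U) * Dp * (Uᵀ * Aᵀ) := by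
          simp only [Matrix.mul_assoc]
      _ = U * Dp * (Uᵀ * U * D * (Uᵀ * U)) * Dp * (Uᵀ * Aᵀ) := by
          rw [hspec]; simp only [Matrix.mul_assoc]
      _ = U * Dp * D * Dp * (Uᵀ * Aᵀ) := by
          rw [hUtU, Matrix.one_mul, Matrix.mul_one]
      _ = U * (Dp * D * Dp) * (Uᵀ * Aᵀ) := by simp only [Matrix.mul_assoc]
      _ = U * Dp * Uᵀ * Aᵀ := by rw [hDpDDp]; simp only [Matrix.mul_assoc]
  · -- (A * B)ᵀ = A * B
    simp only [transpose_mul, transpose_transpose, hDpT, Matrix.mul_assoc]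
  · -- (B * A)ᵀ = B * A
    have hBA : U * Dp * Uᵀ * Aᵀ * A = U * (Dp * D) * Uᵀ := by
      calc U * Dp * Uᵀ * Aᵀ * A
          = U * Dp * (Uᵀ * (Aᵀ * A)) := by simp only [Matrix.mul_assoc]
        _ = U * Dp * (Uᵀ * U * D * Uᵀ) := by rw [hspec]; simp only [Matrix.mul_assoc]
        _ = U * Dp * (D * Uᵀ) := by rw [hUtU, Matrix.one_mul]
        _ = U * (Dp * D) * Uᵀ := by simp only [Matrix.mul_assoc]
    rw [hBA, hDpD]
    simp only [transpose_mul, transpose_transpose, diagonal_transpose, Matrix.mul_assoc]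

lemma pinv_penrose {m n : ℕ} (A : Matrix (Fin m) (Fin n) ℝ) :
    A * pinv A * A = A := by
  rw [pinv, dif_pos (exists_pinv A)]
  exact (exists_pinv A).choose_spec.1

lemma mul_reimCols {q r : ℕ} (M : Matrix (Fin q) (Fin r) ℝ) (X : Fin r → ℂ) :
    M * reimCols X = reimCols ((M.map (fun x => (x : ℂ))) *ᵥ X) := by
  ext i k
  by_cases hk : k = 0 <;>
    simp [reimCols, Matrix.mul_apply, Matrix.mulVec, dotProduct, Matrix.map_apply, hk,
      Complex.re_sum, Complex.im_sum, Complex.re_ofReal_mul, Complex.im_ofReal_mul,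
      Finset.mul_sum, mul_comm]

lemma reimCols_injective {q : ℕ} : Function.Injective (reimCols (r := q)) := by
  intro Z Y h
  funext i
  have h0 := congrFun (congrFun h i) 0
  have h1 := congrFun (congrFun h i) 1
  simp only [reimCols, Matrix.of_apply, if_pos rfl] at h0
  simp only [reimCols, Matrix.of_apply, show (1 : Fin 2) ≠ 0 by decide, if_neg] at h1
  exact Complex.ext h0 h1


/-- If some real matrix `Δ` satisfies `Δ X = Y` (for complex column vectors `X`, `Y`),
then `Δ* = [Re(Y) Im(Y)] · [Re(X) Im(X)]†` also satisfies `Δ* X = Y`. -/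
theorem pinv_solution_satisfies {q r : ℕ} (X : Fin r → ℂ) (Y : Fin q → ℂ)
    (h : ∃ Δ : Matrix (Fin q) (Fin r) ℝ, (Δ.map (fun x => (x : ℂ))).mulVec X = Y) :
    (((reimCols Y * pinv (reimCols X)).map (fun x => (x : ℂ)))).mulVec X = Y := by
  obtain ⟨Δ, hΔ⟩ := h
  have hΔA : Δ * reimCols X = reimCols Y := by rw [mul_reimCols, hΔ]
  have hM : (reimCols Y * pinv (reimCols X)) * reimCols X = reimCols Y := by
    calc (reimCols Y * pinv (reimCols X)) * reimCols X
        = Δ * (reimCols X * pinv (reimCols X) * reimCols X) := by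
          rw [← hΔA]; simp only [Matrix.mul_assoc]
      _ = Δ * reimCols X := by rw [pinv_penrose]
      _ = reimCols Y := hΔA
  apply reimCols_injective
  rw [← mul_reimCols, hM]
end

section
/- Let X ∈ ℂ^r, Y ∈ ℂ^q be nonzero complex column vectors with [Re(X) Im(X)] of rank 2. If a real matrix Δ satisfies ΔX = Y, then ‖Δ‖ ≥ ‖[Re(Y) Im(Y)] · [Re(X) Im(X)]†‖, i.e., the explicit choice Δ* = [Re(Y) Im(Y)][Re(X) Im(X)]† achieves the minimum spectral norm among all real solutions of ΔX = Y. -/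
open Matrix
open scoped Classical
open scoped Matrix.Norms.L2Operator

lemma det_ne_zero_of_rank_eq {n : ℕ} (M : Matrix (Fin n) (Fin n) ℝ)
    (h : M.rank = n) : M.det ≠ 0 := by
  intro hdet
  obtain ⟨v, hv, hMv⟩ := (Matrix.exists_mulVec_eq_zero_iff).2 hdet
  have hker : v ∈ LinearMap.ker M.mulVecLin := by
    simpa [Matrix.mulVecLin] using hMv
  have hrn := LinearMap.finrank_range_add_finrank_ker M.mulVecLin
  rw [show Module.finrank ℝ (LinearMap.range M.mulVecLin) = M.rank from rfl] at hrn
  rw [h, Module.finrank_fin_fun] at hrn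
  have : Module.finrank ℝ (LinearMap.ker M.mulVecLin) = 0 := by omega
  rw [Submodule.finrank_eq_zero] at this
  rw [this, Submodule.mem_bot] at hker
  exact hv hker

lemma pinv_spec {m n : ℕ} (A : Matrix (Fin m) (Fin n) ℝ)
    (h : A.rank = n) :
    A * pinv A * A = A ∧ pinv A * A * pinv A = pinv A ∧
      (A * pinv A)ᵀ = A * pinv A ∧ (pinv A * A)ᵀ = pinv A * A := by
  have hdet : IsUnit (Aᵀ * A).det := isUnit_iff_ne_zero.mpr
    (det_ne_zero_of_rank_eq _ (by rw [Matrix.rank_transpose_mul_self]; exact h))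
  have hinv : (Aᵀ * A)⁻¹ * (Aᵀ * A) = 1 := Matrix.nonsing_inv_mul _ hdet
  set B : Matrix (Fin n) (Fin m) ℝ := (Aᵀ * A)⁻¹ * Aᵀ with hB
  have hBA : B * A = 1 := by rw [hB, Matrix.mul_assoc]; exact hinv
  have hsym : ((Aᵀ * A)⁻¹)ᵀ = (Aᵀ * A)⁻¹ := by
    rw [Matrix.transpose_nonsing_inv, Matrix.transpose_mul, Matrix.transpose_transpose]
  have hex : ∃ B : Matrix (Fin n) (Fin m) ℝ,
      A * B * A = A ∧ B * A * B = B ∧ (A * B)ᵀ = A * B ∧ (B * A)ᵀ = B * A := by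
    refine ⟨B, ?_, ?_, ?_, ?_⟩
    · rw [Matrix.mul_assoc, hBA, Matrix.mul_one]
    · rw [hBA, Matrix.one_mul]
    · rw [Matrix.transpose_mul, hB, Matrix.transpose_mul, Matrix.transpose_transpose,
        hsym, Matrix.mul_assoc]
    · rw [hBA, Matrix.transpose_one]
  rw [pinv, dif_pos hex]
  exact hex.choose_spec

/-- Among real solutions `Δ` of `Δ X = Y`, the explicit choice
`Δ* = [Re(Y) Im(Y)] · [Re(X) Im(X)]†` achieves the minimum spectral norm:
every real solution `Δ` has `‖Δ‖ ≥ ‖Δ*‖`. -/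
theorem pinv_solution_min_norm {q r : ℕ} (X : Fin r → ℂ) (Y : Fin q → ℂ)
    (hX : X ≠ 0) (hY : Y ≠ 0) (hrank : (reimCols X).rank = 2)
    (Δ : Matrix (Fin q) (Fin r) ℝ)
    (hΔ : (Δ.map (fun x => (x : ℂ))).mulVec X = Y) :
    ‖reimCols Y * pinv (reimCols X)‖ ≤ ‖Δ‖ := by
  set A := reimCols X
  obtain ⟨h1, h2, h3, h4⟩ := pinv_spec A hrank
  -- Δ * A = reimCols Y
  have hDA : Δ * A = reimCols Y := by
    ext i k
    have := congrFun hΔ i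
    simp only [Matrix.mulVec, dotProduct, Matrix.map_apply] at this
    have hre := congrArg Complex.re this
    have him := congrArg Complex.im this
    simp only [Complex.re_sum, Complex.im_sum, Complex.mul_re, Complex.mul_im,
      Complex.ofReal_re, Complex.ofReal_im, zero_mul, sub_zero, zero_mul, add_zero] at hre him
    fin_cases k <;>
      simp [A, reimCols, Matrix.mul_apply, hre, him]
  set P := A * pinv A with hP
  have hPP : P * P = P := by
    rw [hP, Matrix.mul_assoc, ← Matrix.mul_assoc (pinv A), h2]
  have hPnorm : ‖P‖ ≤ 1 := by
    have hsq : ‖P‖ * ‖P‖ = ‖P‖ := by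
      calc ‖P‖ * ‖P‖ = ‖Pᴴ * P‖ := (Matrix.l2_opNorm_conjTranspose_mul_self P).symm
        _ = ‖P * P‖ := by rw [Matrix.conjTranspose_eq_transpose_of_trivial, h3]
        _ = ‖P‖ := by rw [hPP]
    nlinarith [norm_nonneg P]
  have key : reimCols Y * pinv A = Δ * P := by
    rw [hP, ← Matrix.mul_assoc, hDA]
  calc ‖reimCols Y * pinv A‖ = ‖Δ * P‖ := by rw [key]
    _ ≤ ‖Δ‖ * ‖P‖ := Matrix.l2_opNorm_mul Δ P
    _ ≤ ‖Δ‖ * 1 := by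
        exact mul_le_mul_of_nonneg_left hPnorm (norm_nonneg Δ)
    _ = ‖Δ‖ := mul_one _
end
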